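/- arXiv:1108.0452 — 7 statements merged into one kernel-verified Lean document; each statement's English description precedes it below -/
import Mathlib

section
/- Every Milnor algebra is unimodular, i.e. tr(ad_x) = 0 for all x ∈ g. -/
open scoped RealInnerProductSpace

lemma trace_eq_zero_of_skew {V : Type*} [NormedAddCommGroup V] [InnerProductSpace ℝ V]
    [FiniteDimensional ℝ V] (f : V →ₗ[ℝ] V)
    (h : ∀ y z : V, ⟪f y, z⟫ + ⟪y, f z⟫ = 0) :
    LinearMap.trace ℝ V f = 0 := by
  let b := stdOrthonormalBasis ℝ V
  rw [LinearMap.trace_eq_matrix_trace ℝ b.toBasis, Matrix.trace]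
  have : ∀ i, Matrix.diag (LinearMap.toMatrix b.toBasis b.toBasis f) i = 0 := by
    intro i
    have h1 : Matrix.diag (LinearMap.toMatrix b.toBasis b.toBasis f) i
        = ⟪b i, f (b i)⟫ := by
      simp [Matrix.diag, LinearMap.toMatrix_apply, OrthonormalBasis.coe_toBasis,
        OrthonormalBasis.coe_toBasis_repr_apply, OrthonormalBasis.repr_apply_apply]
    have h2 := h (b i) (b i)
    rw [real_inner_comm] at h2
    rw [h1]; linarith
  exact Finset.sum_eq_zero fun i _ => this i

/-- Every Milnor algebra is unimodular: `tr (ad_x) = 0` for every `x`. -/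
theorem milnor_unimodular {V : Type*} [NormedAddCommGroup V] [InnerProductSpace ℝ V]
    [FiniteDimensional ℝ V]
    (B : V →ₗ[ℝ] V →ₗ[ℝ] V)
    (hanti : ∀ x y : V, B x y = - B y x)
    (hjac : ∀ x y z : V, B x (B y z) = B (B x y) z + B y (B x z))
    (S : Set V)
    (hS : S = {x : V | ∀ y z : V, ⟪B x y, z⟫ + ⟪y, B x z⟫ = 0})
    (D : Submodule ℝ V)
    (hD : D = Submodule.span ℝ {w : V | ∃ x y : V, B x y = w})
    (hSab : ∀ x ∈ S, ∀ y ∈ S, B x y = 0)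
    (hDab : ∀ u ∈ D, ∀ v ∈ D, B u v = 0)
    (hperp : ∀ v : V, v ∈ D ↔ ∀ s ∈ S, ⟪s, v⟫ = 0) :
    ∀ x : V, LinearMap.trace ℝ V (B x) = 0 := by
  intro x
  set W : Submodule ℝ V := Submodule.span ℝ S with hW
  have hDW : D = Wᗮ := by
    ext v
    rw [hperp, Submodule.mem_orthogonal]
    constructor
    · intro h u hu
      induction hu using Submodule.span_induction with
      | mem u hu => exact h u hu
      | zero => simp
      | add u w _ _ hu hw => rw [inner_add_left, hu, hw]; ring
      | smul c u _ hu => rw [inner_smul_left, hu]; simp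
    · intro h s hs
      exact h s (Submodule.subset_span hs)
  have hWs : ∀ p ∈ W, ∀ y z : V, ⟪B p y, z⟫ + ⟪y, B p z⟫ = 0 := by
    intro p hp
    induction hp using Submodule.span_induction with
    | mem u hu => rw [hS] at hu; exact hu
    | zero => simp
    | add u w _ _ hu hw =>
        intro y z
        have := hu y z; have := hw y z
        simp only [map_add, LinearMap.add_apply, inner_add_left, inner_add_right]
        linarith
    | smul c u _ hu =>
        intro y z
        have := hu y z
        simp only [map_smul, LinearMap.smul_apply, real_inner_smul_left,
          real_inner_smul_right]
        linear_combination c * hu y z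
  obtain ⟨p, hp, q, hq, hx⟩ := W.exists_add_mem_mem_orthogonal x
  rw [← hDW] at hq
  have hxs : x = p + q := hx
  have h1 : LinearMap.trace ℝ V (B p) = 0 := trace_eq_zero_of_skew _ (hWs p hp)
  -- trace of B q : nilpotent
  have hmem : ∀ y : V, B q y ∈ D := by
    intro y
    rw [hD]
    exact Submodule.subset_span ⟨q, y, rfl⟩
  have hnil : IsNilpotent (B q) := by
    refine ⟨2, ?_⟩
    ext y
    have : B q (B q y) = 0 := hDab q hq (B q y) (hmem y)
    simpa [pow_succ, Module.End.mul_apply] using this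
  have h2 : LinearMap.trace ℝ V (B q) = 0 :=
    (LinearMap.isNilpotent_trace_of_isNilpotent hnil).eq_zero
  rw [hxs, map_add, map_add, h1, h2, add_zero]
end

section
/- Every nilpotent Milnor algebra is abelian. -/
open scoped RealInnerProductSpace

/-- The lower central series of a bilinear bracket `B` on a real vector space. -/
def lowerCentral {V : Type*} [AddCommGroup V] [Module ℝ V]
    (B : V →ₗ[ℝ] V →ₗ[ℝ] V) : ℕ → Submodule ℝ V
  | 0 => ⊤
  | n + 1 => Submodule.span ℝ {w : V | ∃ x : V, ∃ y ∈ lowerCentral B n, B x y = w}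

lemma skew_inner_pow {V : Type*} [NormedAddCommGroup V] [InnerProductSpace ℝ V]
    (A : V →ₗ[ℝ] V) (hA : ∀ y z : V, ⟪A y, z⟫ + ⟪y, A z⟫ = 0) :
    ∀ (j : ℕ) (v w : V), ⟪(A ^ j) v, w⟫ = (-1 : ℝ) ^ j * ⟪v, (A ^ j) w⟫ := by
  intro j
  induction j with
  | zero => intro v w; simp
  | succ n ih =>
      intro v w
      have h1 : (A ^ (n + 1)) v = (A ^ n) (A v) := by
        rw [pow_succ]; rfl
      have h2 : (A ^ (n + 1)) w = A ((A ^ n) w) := by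
        rw [pow_succ']; rfl
      have h3 : ⟪A v, (A ^ n) w⟫ = - ⟪v, A ((A ^ n) w)⟫ := by
        have := hA v ((A ^ n) w); linarith
      rw [h1, ih (A v) w, h3, h2]
      ring

lemma skew_nilpotent_zero {V : Type*} [NormedAddCommGroup V] [InnerProductSpace ℝ V]
    (A : V →ₗ[ℝ] V) (hA : ∀ y z : V, ⟪A y, z⟫ + ⟪y, A z⟫ = 0) :
    ∀ n : ℕ, A ^ n = 0 → A = 0 := by
  intro n
  induction n using Nat.strong_induction_on with
  | _ n ih =>
      intro hn
      match n, hn with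
      | 0, hn =>
          ext v
          have : (A ^ 0) v = 0 := by rw [hn]; rfl
          simp at this
          simp [this]
      | 1, hn => simpa using hn
      | (m + 2), hn =>
          set k := (m + 2 + 1) / 2 with hk
          have hk1 : 1 ≤ k := by omega
          have hklt : k < m + 2 := by omega
          have h2k : m + 2 ≤ 2 * k := by omega
          have hAk : A ^ k = 0 := by
            ext v
            have h2kv : (A ^ (2 * k)) v = 0 := by
              have : A ^ (2 * k) = A ^ (m + 2) * A ^ (2 * k - (m + 2)) := by
                rw [← pow_add]; congr 1; omega
              rw [this, hn]; simp
            have : ⟪(A ^ k) v, (A ^ k) v⟫ = 0 := by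
              rw [skew_inner_pow A hA k v ((A ^ k) v)]
              have : (A ^ k) ((A ^ k) v) = (A ^ (2 * k)) v := by
                rw [two_mul, pow_add]; rfl
              rw [this, h2kv]
              simp
            simpa using inner_self_eq_zero.mp this
          exact ih k hklt hAk

/-- Every nilpotent Milnor algebra is abelian. -/
theorem milnor_nilpotent_abelian {V : Type*} [NormedAddCommGroup V]
    [InnerProductSpace ℝ V] [FiniteDimensional ℝ V]
    (B : V →ₗ[ℝ] V →ₗ[ℝ] V)
    (hanti : ∀ x y : V, B x y = - B y x)
    (hjac : ∀ x y z : V, B x (B y z) = B (B x y) z + B y (B x z))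
    (S : Set V)
    (hS : S = {x : V | ∀ y z : V, ⟪B x y, z⟫ + ⟪y, B x z⟫ = 0})
    (D : Submodule ℝ V)
    (hD : D = Submodule.span ℝ {w : V | ∃ x y : V, B x y = w})
    (hSab : ∀ x ∈ S, ∀ y ∈ S, B x y = 0)
    (hDab : ∀ u ∈ D, ∀ v ∈ D, B u v = 0)
    (hperp : ∀ v : V, v ∈ D ↔ ∀ s ∈ S, ⟪s, v⟫ = 0)
    (hnilp : ∃ n : ℕ, lowerCentral B n = ⊥) :
    ∀ x y : V, B x y = 0 := by
  obtain ⟨n, hn⟩ := hnilp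
  -- Step 1: for s ∈ S, (B s)^m v ∈ lowerCentral B m
  have hpowmem : ∀ (s : V) (m : ℕ) (v : V), ((B s) ^ m) v ∈ lowerCentral B m := by
    intro s m
    induction m with
    | zero => intro v; simp [lowerCentral]
    | succ m ih =>
        intro v
        have h1 : ((B s) ^ (m + 1)) v = B s (((B s) ^ m) v) := by
          rw [pow_succ']; rfl
        rw [h1]
        exact Submodule.subset_span ⟨s, ((B s) ^ m) v, ih v, rfl⟩
  -- Step 2: for s ∈ S, B s = 0
  have hSzero : ∀ s ∈ S, B s = 0 := by
    intro s hs
    have hskew : ∀ y z : V, ⟪(B s) y, z⟫ + ⟪y, (B s) z⟫ = 0 := by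
      rw [hS] at hs; exact hs
    apply skew_nilpotent_zero (B s) hskew n
    ext v
    have := hpowmem s n v
    rw [hn] at this
    simpa using this
  -- Step 3: B x = 0 for x ∈ span ℝ S
  have hspanS : ∀ x ∈ Submodule.span ℝ S, B x = 0 := by
    intro x hx
    induction hx using Submodule.span_induction with
    | mem x hx => exact hSzero x hx
    | zero => simp
    | add u v _ _ hu hv => rw [map_add, hu, hv]; simp
    | smul c u _ hu => rw [map_smul, hu]; simp
  -- Step 4: D = (span ℝ S)ᗮ
  have hDeq : D = (Submodule.span ℝ S)ᗮ := by
    ext v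
    rw [hperp, Submodule.mem_orthogonal]
    constructor
    · intro h u hu
      induction hu using Submodule.span_induction with
      | mem u hu => exact h u hu
      | zero => simp
      | add a b _ _ ha hb => rw [inner_add_left, ha, hb]; ring
      | smul c a _ ha => rw [inner_smul_left, ha]; simp
    · intro h s hs
      exact h s (Submodule.subset_span hs)
  -- Step 5: span S ⊔ D = ⊤
  have hsup : Submodule.span ℝ S ⊔ D = ⊤ := by
    rw [hDeq]
    exact Submodule.sup_orthogonal_of_hasOrthogonalProjection
  intro x y
  have hx : x ∈ Submodule.span ℝ S ⊔ D := by rw [hsup]; trivial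
  have hy : y ∈ Submodule.span ℝ S ⊔ D := by rw [hsup]; trivial
  obtain ⟨xs, hxs, xd, hxd, rfl⟩ := Submodule.mem_sup.mp hx
  obtain ⟨ys, hys, yd, hyd, rfl⟩ := Submodule.mem_sup.mp hy
  have h1 : B xs = 0 := hspanS xs hxs
  have h2 : B ys = 0 := hspanS ys hys
  have h3 : B xd yd = 0 := hDab xd hxd yd hyd
  have h4 : B xd ys = 0 := by rw [hanti xd ys, h2]; simp
  simp [map_add, h1, h3, h4]
end

section
/- Let g = S ⊕ [g,g] be a Milnor algebra and define the bilinear map A : g × g → g by A_x = ad_x for x ∈ S and A_x = 0 for x ∈ [g,g] (extended linearly). Then A_{[x,y]} = A_x ∘ A_y − A_y ∘ A_x for all x, y ∈ g; i.e., the curvature of A vanishes. -/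
open scoped RealInnerProductSpace

/-- In a Milnor algebra `g = S ⊕ [g,g]`, the bilinear map `A` defined by `A_x = ad_x`
for `x ∈ S` and `A_x = 0` for `x ∈ [g,g]` is flat:
`A_{[x,y]} = A_x ∘ A_y − A_y ∘ A_x` for all `x, y`. -/
theorem milnor_connection_flat {V : Type*} [NormedAddCommGroup V]
    [InnerProductSpace ℝ V] [FiniteDimensional ℝ V]
    (B : V →ₗ[ℝ] V →ₗ[ℝ] V)
    (hanti : ∀ x y : V, B x y = - B y x)
    (hjac : ∀ x y z : V, B x (B y z) = B (B x y) z + B y (B x z))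
    (S : Set V)
    (hS : S = {x : V | ∀ y z : V, ⟪B x y, z⟫ + ⟪y, B x z⟫ = 0})
    (D : Submodule ℝ V)
    (hD : D = Submodule.span ℝ {w : V | ∃ x y : V, B x y = w})
    (hSab : ∀ x ∈ S, ∀ y ∈ S, B x y = 0)
    (hDab : ∀ u ∈ D, ∀ v ∈ D, B u v = 0)
    (hperp : ∀ v : V, v ∈ D ↔ ∀ s ∈ S, ⟪s, v⟫ = 0)
    (hdec : ∀ v : V, ∃ s ∈ S, ∃ d ∈ D, v = s + d)
    (A : V →ₗ[ℝ] V →ₗ[ℝ] V)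
    (hAS : ∀ x ∈ S, A x = B x)
    (hAD : ∀ x ∈ D, A x = 0) :
    ∀ x y : V, A (B x y) = A x ∘ₗ A y - A y ∘ₗ A x := by
  intro x y
  obtain ⟨s, hs, d, hd, hx⟩ := hdec x
  obtain ⟨t, ht, e, he, hy⟩ := hdec y
  have hBxy : B x y ∈ D := by
    rw [hD]
    exact Submodule.subset_span ⟨x, y, rfl⟩
  have hAx : A x = B s := by
    rw [hx, map_add, hAS s hs, hAD d hd, add_zero]
  have hAy : A y = B t := by
    rw [hy, map_add, hAS t ht, hAD e he, add_zero]
  rw [hAD _ hBxy, hAx, hAy]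
  ext z
  have := hjac s t z
  rw [hSab s hs t ht] at this
  simp only [map_zero, LinearMap.zero_apply, zero_add] at this
  simp [this]
end

section
/- In a Milnor algebra g = S ⊕ [g,g], the Levi-Civita product satisfies A_x = ad_x for x ∈ S and A_x = 0 for x ∈ [g,g], where A is defined by the Koszul formula 2⟨A_x y, z⟩ = ⟨[x,y],z⟩ + ⟨[z,x],y⟩ + ⟨[z,y],x⟩. -/
open scoped RealInnerProductSpace

/-- In a Milnor algebra `g = S ⊕ [g,g]`, the Levi-Civita product given by the Koszul
formula satisfies `A_x = ad_x` for `x ∈ S` and `A_x = 0` for `x ∈ [g,g]`. -/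
theorem milnor_levi_civita {V : Type*} [NormedAddCommGroup V]
    [InnerProductSpace ℝ V] [FiniteDimensional ℝ V]
    (B : V →ₗ[ℝ] V →ₗ[ℝ] V)
    (hanti : ∀ x y : V, B x y = - B y x)
    (hjac : ∀ x y z : V, B x (B y z) = B (B x y) z + B y (B x z))
    (S : Set V)
    (hS : S = {x : V | ∀ y z : V, ⟪B x y, z⟫ + ⟪y, B x z⟫ = 0})
    (D : Submodule ℝ V)
    (hD : D = Submodule.span ℝ {w : V | ∃ x y : V, B x y = w})
    (hSab : ∀ x ∈ S, ∀ y ∈ S, B x y = 0)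
    (hDab : ∀ u ∈ D, ∀ v ∈ D, B u v = 0)
    (hperp : ∀ v : V, v ∈ D ↔ ∀ s ∈ S, ⟪s, v⟫ = 0)
    (A : V →ₗ[ℝ] V →ₗ[ℝ] V)
    (hKoszul : ∀ x y z : V,
      2 * ⟪A x y, z⟫ = ⟪B x y, z⟫ + ⟪B z x, y⟫ + ⟪B z y, x⟫) :
    (∀ x ∈ S, A x = B x) ∧ (∀ x ∈ D, A x = 0) := by
  have hBD : ∀ x y : V, B x y ∈ D := fun x y => by
    rw [hD]; exact Submodule.subset_span ⟨x, y, rfl⟩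
  have skew : ∀ s ∈ S, ∀ u v : V, ⟪B s u, v⟫ + ⟪u, B s v⟫ = 0 := by
    intro s hs; rw [hS] at hs; exact hs
  have hSD : ∀ s ∈ S, ∀ d ∈ D, ⟪s, d⟫ = 0 := by
    intro s hs d hd; exact (hperp d).mp hd s hs
  -- S is a submodule
  let S' : Submodule ℝ V :=
  { carrier := S
    add_mem' := by
      intro a b ha hb
      rw [hS] at ha hb ⊢
      intro y z
      have h1 := ha y z
      have h2 := hb y z
      simp only [map_add, LinearMap.add_apply, inner_add_left, inner_add_right]
      linarith
    zero_mem' := by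
      show (0:V) ∈ S
      rw [hS]; intro y z; simp
    smul_mem' := by
      intro c a ha
      show c • a ∈ S
      have ha' : a ∈ S := ha
      rw [hS] at ha' ⊢
      replace ha := ha'
      intro y z
      have h1 := ha y z
      simp only [map_smul, LinearMap.smul_apply, real_inner_smul_left,
        real_inner_smul_right, smul_eq_mul]
      linear_combination c * h1 }
  have hDperp : D = S'ᗮ := by
    ext v
    rw [hperp v, Submodule.mem_orthogonal]
    rfl
  have decomp : ∀ v : V, ∃ a ∈ S, ∃ b ∈ D, v = a + b := by
    intro v
    obtain ⟨a, ha, b, hb, hv⟩ := S'.exists_add_mem_mem_orthogonal v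
    exact ⟨a, ha, b, hDperp ▸ hb, hv⟩
  constructor
  · intro x hx
    apply LinearMap.ext
    intro y
    apply ext_inner_right ℝ
    intro z
    have hK := hKoszul x y z
    have h1 : ⟪x, B z y⟫ = 0 := hSD x hx _ (hBD z y)
    have h2 : ⟪B x z, y⟫ + ⟪z, B x y⟫ = 0 := skew x hx z y
    have h3 : B z x = - B x z := hanti z x
    rw [h3, inner_neg_left] at hK
    linarith [hK, h1, h2, real_inner_comm (B z y) x, real_inner_comm z (B x y)]
  · intro x hx
    apply LinearMap.ext
    intro y
    simp only [LinearMap.zero_apply]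
    apply ext_inner_right ℝ
    intro z
    rw [inner_zero_left]
    have hK := hKoszul x y z
    obtain ⟨a, ha, b, hb, hy⟩ := decomp y
    obtain ⟨c, hc, e, he, hz⟩ := decomp z
    subst hy hz
    have h1 : B x b = 0 := hDab x hx b hb
    have h2 : B e x = 0 := hDab e he x hx
    have h3 : B c a = 0 := hSab c hc a ha
    have h4 : B e b = 0 := hDab e he b hb
    have h5 : ⟪c, B x a⟫ = 0 := hSD c hc _ (hBD x a)
    have h6 : ⟪a, B c x⟫ = 0 := hSD a ha _ (hBD c x)
    have h7 : ⟪B a x, e⟫ + ⟪x, B a e⟫ = 0 := skew a ha x e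
    have h8 : ⟪B c x, b⟫ + ⟪x, B c b⟫ = 0 := skew c hc x b
    have h9 : B x a = - B a x := hanti x a
    have h10 : B e a = - B a e := hanti e a
    simp only [map_add, LinearMap.add_apply, inner_add_left, inner_add_right,
      h1, h2, h3, h4, h9, h10, inner_neg_left, inner_neg_right, inner_zero_left,
      inner_zero_right, map_zero, LinearMap.zero_apply, add_zero, zero_add] at hK ⊢
    have h11 : ⟪c, B a x⟫ = 0 := hSD c hc _ (hBD a x)
    linarith [real_inner_comm (B a x) c, real_inner_comm (B a x) e, h11,
      real_inner_comm (B c x) a, real_inner_comm (B c x) b,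
      real_inner_comm (B c b) x, real_inner_comm (B a e) x,
      real_inner_comm x (B a e), real_inner_comm x (B c b), h5, h6, h7, h8, hK]
end

section
/- Let V be a nonzero finite-dimensional real inner product space and let F be a family of pairwise commuting skew-adjoint endomorphisms of V whose common kernel is trivial (⋂_{A∈F} ker A = 0). Then the dimension of V is even. -/
open scoped RealInnerProductSpace Matrix

/-- An injective skew-adjoint endomorphism forces even dimension. -/
lemma even_finrank_of_skew_injective {V : Type*} [NormedAddCommGroup V]
    [InnerProductSpace ℝ V] [FiniteDimensional ℝ V] (A : V →ₗ[ℝ] V)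
    (hskew : ∀ x y : V, ⟪A x, y⟫ = - ⟪x, A y⟫)
    (hinj : Function.Injective A) :
    Even (Module.finrank ℝ V) := by
  set n := Module.finrank ℝ V with hn
  let b : OrthonormalBasis (Fin n) ℝ V := stdOrthonormalBasis ℝ V
  set M : Matrix (Fin n) (Fin n) ℝ := LinearMap.toMatrix b.toBasis b.toBasis A with hM
  have hMentry : ∀ i j, M i j = ⟪b i, A (b j)⟫ := by
    intro i j
    rw [hM, LinearMap.toMatrix_apply]
    simp [b.repr_apply_apply]
  have hMt : Mᵀ = -M := by
    ext i j
    have : ⟪b j, A (b i)⟫ = - ⟪b i, A (b j)⟫ := by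
      rw [real_inner_comm, hskew]
    simp [Matrix.transpose_apply, hMentry, this]
  have hdetM : M.det ≠ 0 := by
    have : LinearMap.det A ≠ 0 := by
      intro h
      have := LinearMap.bot_lt_ker_of_det_eq_zero h
      rw [LinearMap.ker_eq_bot.mpr hinj] at this
      exact lt_irrefl _ this
    rwa [← LinearMap.det_toMatrix b.toBasis] at this
  have h1 : (1 : ℝ) * M.det = (-1 : ℝ) ^ n * M.det := by
    rw [one_mul]
    conv_lhs => rw [← Matrix.det_transpose M]
    rw [hMt, Matrix.det_neg, Fintype.card_fin]
  have hpow : (-1 : ℝ) ^ n = 1 := (mul_right_cancel₀ hdetM h1).symm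
  exact (neg_one_pow_eq_one_iff_even (R := ℝ) (by norm_num : (-1 : ℝ) ≠ 1)).mp hpow

lemma even_dim_aux : ∀ (n : ℕ) {V : Type*} [NormedAddCommGroup V]
    [InnerProductSpace ℝ V] [FiniteDimensional ℝ V], Module.finrank ℝ V = n →
    ∀ (F : Set (V →ₗ[ℝ] V)),
    (∀ A ∈ F, ∀ x y : V, ⟪A x, y⟫ = - ⟪x, A y⟫) →
    (∀ A ∈ F, ∀ C ∈ F, A ∘ₗ C = C ∘ₗ A) →
    ((⨅ A ∈ F, LinearMap.ker A) = ⊥) → Even n := by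
  intro n
  induction n using Nat.strong_induction_on with
  | _ n IH =>
  intro V _ _ _ hfin F hskew hcomm hker
  by_cases hA : ∃ A ∈ F, A ≠ 0
  · obtain ⟨A, hAF, hAne⟩ := hA
    set K : Submodule ℝ V := LinearMap.ker A with hK
    -- every C ∈ F preserves K
    have hpres : ∀ C ∈ F, ∀ x ∈ K, C x ∈ K := by
      intro C hC x hx
      have : A (C x) = C (A x) := by
        have := hcomm A hAF C hC
        exact congrFun (congrArg DFunLike.coe this) x
      simp only [hK, LinearMap.mem_ker] at hx ⊢
      rw [this, hx, map_zero]
    -- A preserves Kᗮ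
    have hApres : ∀ x ∈ Kᗮ, A x ∈ Kᗮ := by
      intro x hx
      rw [Submodule.mem_orthogonal] at hx ⊢
      intro u hu
      have hu0 : A u = 0 := hu
      have : ⟪A x, u⟫ = - ⟪x, A u⟫ := hskew A hAF x u
      rw [hu0, inner_zero_right, neg_zero] at this
      rw [real_inner_comm]
      exact this
    -- restriction of A to Kᗮ is injective and skew-adjoint
    set B : Kᗮ →ₗ[ℝ] Kᗮ := A.restrict hApres with hB
    have hBskew : ∀ x y : Kᗮ, ⟪B x, y⟫ = - ⟪x, B y⟫ := by
      intro x y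
      exact hskew A hAF x y
    have hBinj : Function.Injective B := by
      rw [← LinearMap.ker_eq_bot]
      rw [Submodule.eq_bot_iff]
      rintro ⟨x, hx⟩ hxk
      have hx0 : A x = 0 := by
        have : (B ⟨x, hx⟩ : V) = 0 := by
          rw [LinearMap.mem_ker] at hxk
          rw [hxk]; rfl
        simpa [hB, LinearMap.restrict_apply] using this
      have hxK : x ∈ K := hx0
      have : x = 0 := by
        have := Submodule.inf_orthogonal_eq_bot K
        have hmem : x ∈ K ⊓ Kᗮ := ⟨hxK, hx⟩
        rw [this] at hmem
        exact hmem
      exact Subtype.ext this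
    have hEvenOrth : Even (Module.finrank ℝ Kᗮ) :=
      even_finrank_of_skew_injective B hBskew hBinj
    -- the restricted family on K
    have hKne : K ≠ ⊤ := by
      intro h
      apply hAne
      ext x
      have : x ∈ K := h ▸ Submodule.mem_top
      simpa [hK] using this
    have hlt : Module.finrank ℝ K < n := hfin ▸ Submodule.finrank_lt hKne
    set F' : Set (K →ₗ[ℝ] K) :=
      {D | ∃ C : V →ₗ[ℝ] V, ∃ hC : C ∈ F, D = C.restrict (hpres C hC)} with hF'
    have hEvenK : Even (Module.finrank ℝ K) := by
      refine IH _ hlt rfl F' ?_ ?_ ?_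
      · rintro D ⟨C, hC, rfl⟩ x y
        exact hskew C hC x y
      · rintro D ⟨C, hC, rfl⟩ D' ⟨C', hC', rfl⟩
        ext x
        have h := hcomm C hC C' hC'
        have := congrFun (congrArg DFunLike.coe h) (x : V)
        simpa [LinearMap.restrict_apply] using this
      · rw [Submodule.eq_bot_iff]
        rintro ⟨x, hx⟩ hxk
        have hx0 : ∀ C ∈ F, C x = 0 := by
          intro C hC
          have hm : (⟨x, hx⟩ : K) ∈ LinearMap.ker (C.restrict (hpres C hC)) := by
            exact (Submodule.mem_iInf _).mp
              ((Submodule.mem_iInf _).mp hxk (C.restrict (hpres C hC))) ⟨C, hC, rfl⟩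
          rw [LinearMap.mem_ker] at hm
          have := congrArg (Subtype.val) hm
          simpa [LinearMap.restrict_apply] using this
        have : x ∈ (⨅ C ∈ F, LinearMap.ker C) := by
          rw [Submodule.mem_iInf]
          intro C
          rw [Submodule.mem_iInf]
          intro hC
          exact hx0 C hC
        rw [hker] at this
        exact Subtype.ext this
    have hsum : Module.finrank ℝ K + Module.finrank ℝ Kᗮ = n := by
      rw [Submodule.finrank_add_finrank_orthogonal, hfin]
    rw [← hsum]
    exact hEvenK.add hEvenOrth
  · -- all members of F are zero, so the common kernel is everything, so V = 0
    push_neg at hA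
    have : (⨅ A ∈ F, LinearMap.ker A) = ⊤ := by
      rw [eq_top_iff]
      intro x _
      rw [Submodule.mem_iInf]
      intro C
      rw [Submodule.mem_iInf]
      intro hC
      rw [LinearMap.mem_ker, hA C hC]
      rfl
    rw [this] at hker
    have h0 : ∀ x : V, x = 0 := fun x =>
      (Submodule.mem_bot ℝ).mp (hker ▸ Submodule.mem_top)
    have : Module.finrank ℝ V = 0 := by
      have : Subsingleton V := ⟨fun a b => by rw [h0 a, h0 b]⟩
      exact Module.finrank_zero_of_subsingleton
    rw [← hfin, this]
    exact Even.zero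

/-- If a nonzero finite-dimensional real inner product space admits a family of
pairwise commuting skew-adjoint endomorphisms with trivial common kernel, then its
dimension is even. -/
theorem even_dim_of_commuting_skewAdjoint {V : Type*} [NormedAddCommGroup V]
    [InnerProductSpace ℝ V] [FiniteDimensional ℝ V] [Nontrivial V]
    (F : Set (V →ₗ[ℝ] V))
    (hskew : ∀ A ∈ F, ∀ x y : V, ⟪A x, y⟫ = - ⟪x, A y⟫)
    (hcomm : ∀ A ∈ F, ∀ C ∈ F, A ∘ₗ C = C ∘ₗ A)
    (hker : (⨅ A ∈ F, LinearMap.ker A) = ⊥) :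
    Even (Module.finrank ℝ V) := by
  exact even_dim_aux _ rfl F hskew hcomm hker
end

section
/- In a nonabelian Milnor algebra g = S ⊕ [g,g], the derived ideal [g,g] has even (positive) dimension. -/
open scoped RealInnerProductSpace
open Module

-- step 1: injective skew-adjoint endomorphism forces even dimension
lemma even_of_skew_inj {W : Type*} [NormedAddCommGroup W] [InnerProductSpace ℝ W]
    [FiniteDimensional ℝ W] (A : W →ₗ[ℝ] W)
    (hskew : ∀ x y : W, ⟪A x, y⟫ = -⟪x, A y⟫)
    (hinj : Function.Injective A) : Even (finrank ℝ W) := by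
  have hadj : LinearMap.adjoint A = -A := by
    symm
    rw [LinearMap.eq_adjoint_iff]
    intro x y
    simp [hskew x y]
  -- determinant argument
  have hbij : Function.Bijective A := ⟨hinj, (LinearMap.injective_iff_surjective).mp hinj⟩
  have hunit : IsUnit A := by
    exact (LinearMap.isUnit_iff_ker_eq_bot A).mpr (LinearMap.ker_eq_bot.mpr hinj)
  have hdet : IsUnit (LinearMap.det A) := LinearMap.isUnit_det A hunit
  have hdetadj : LinearMap.det (LinearMap.adjoint A) = LinearMap.det A := by
    let b := stdOrthonormalBasis ℝ W
    rw [← LinearMap.det_toMatrix b.toBasis, ← LinearMap.det_toMatrix b.toBasis,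
      LinearMap.toMatrix_adjoint b b]
    rw [Matrix.det_conjTranspose, star_trivial]
  have hneg : LinearMap.det (-A) = (-1 : ℝ) ^ finrank ℝ W * LinearMap.det A := by
    rw [show (-A : W →ₗ[ℝ] W) = (-1 : ℝ) • A from by ext x; simp, LinearMap.det_smul]
  have : (-1 : ℝ) ^ finrank ℝ W = 1 := by
    have h1 := hdetadj
    rw [hadj, hneg] at h1
    rcases (mul_left_eq_self₀.mp h1) with h | h
    · exact h
    · exact absurd h hdet.ne_zero
  exact (neg_one_pow_eq_one_iff_even (by norm_num : (-1:ℝ) ≠ 1)).mp this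

universe u

-- step 2: a commuting family of skew-adjoint endomorphisms with trivial common
-- kernel forces even dimension
lemma even_of_commuting_skew : ∀ (n : ℕ) (W : Type u) [NormedAddCommGroup W]
    [InnerProductSpace ℝ W] [FiniteDimensional ℝ W], finrank ℝ W = n →
    ∀ (F : Set (W →ₗ[ℝ] W)),
    (∀ A ∈ F, ∀ x y : W, ⟪A x, y⟫ = -⟪x, A y⟫) →
    (∀ A ∈ F, ∀ C ∈ F, ∀ x : W, A (C x) = C (A x)) →
    (∀ w : W, (∀ A ∈ F, A w = 0) → w = 0) →
    Even n := by
  intro n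
  induction n using Nat.strong_induction_on with
  | _ n IH =>
    intro W _ _ _ hn F hskew hcomm hker
    by_cases hF : ∀ A ∈ F, A = 0
    · -- all maps vanish, so W is trivial
      have hW : ∀ w : W, w = 0 := fun w =>
        hker w (fun A hA => by rw [hF A hA]; rfl)
      have : Subsingleton W := ⟨fun a b => by rw [hW a, hW b]⟩
      have : finrank ℝ W = 0 := finrank_zero_of_subsingleton
      simp [← hn, this]
    · push_neg at hF
      obtain ⟨A, hA, hAne⟩ := hF
      set K := LinearMap.ker A with hK
      set R := LinearMap.range A with hR
      -- A preserves its range, and is injective on it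
      have hmapR : ∀ x ∈ R, A x ∈ R := fun x _ => LinearMap.mem_range_self A x
      let A' : R →ₗ[ℝ] R := A.restrict hmapR
      have hA'skew : ∀ x y : R, ⟪A' x, y⟫ = -⟪x, A' y⟫ := by
        intro x y
        have : (⟪A' x, y⟫ : ℝ) = ⟪A (x : W), (y : W)⟫ := rfl
        rw [this, hskew A hA]
        rfl
      have hA'inj : Function.Injective A' := by
        rw [← LinearMap.ker_eq_bot]
        rw [Submodule.eq_bot_iff]
        rintro z hz
        have hz0 : A (z : W) = 0 := by
          have : ((A' z : R) : W) = A (z : W) := rfl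
          rw [LinearMap.mem_ker] at hz
          rw [hz] at this
          exact this.symm
        obtain ⟨u, hu⟩ := z.2
        have : (⟪(z : W), (z : W)⟫ : ℝ) = 0 := by
          have h3 : (⟪(z : W), (z : W)⟫ : ℝ) = ⟪A u, (z : W)⟫ := by rw [hu]
          rw [h3, hskew A hA, hz0, inner_zero_right, neg_zero]
        have hz0' : (z : W) = 0 := by
          exact inner_self_eq_zero.mp this
        exact Subtype.ext hz0'
      have hEvenR : Even (finrank ℝ R) := even_of_skew_inj A' hA'skew hA'inj
      -- the kernel is invariant under the family
      have hmapK : ∀ B ∈ F, ∀ x ∈ K, B x ∈ K := by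
        intro B hB x hx
        rw [hK, LinearMap.mem_ker] at hx ⊢
        rw [hcomm A hA B hB, hx, map_zero]
      -- the restricted family on the kernel
      set F' : Set (K →ₗ[ℝ] K) :=
        {C | ∃ B ∈ F, ∀ x : K, ((C x : K) : W) = B (x : W)} with hF'
      have hK'ker : ∀ w : K, (∀ C ∈ F', C w = 0) → w = 0 := by
        intro w hw
        have : (w : W) = 0 := by
          apply hker
          intro B hB
          have h1 := hw (B.restrict (hmapK B hB)) ⟨B, hB, fun x => rfl⟩
          have h2 : ((B.restrict (hmapK B hB) w : K) : W) = B (w : W) := rfl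
          rw [h1] at h2
          exact h2.symm
        exact Subtype.ext this
      have hK'skew : ∀ C ∈ F', ∀ x y : K, ⟪C x, y⟫ = -⟪x, C y⟫ := by
        rintro C ⟨B, hB, hCB⟩ x y
        have h1 : (⟪C x, y⟫ : ℝ) = ⟪((C x : K) : W), (y : W)⟫ := rfl
        have h2 : (⟪x, C y⟫ : ℝ) = ⟪(x : W), ((C y : K) : W)⟫ := rfl
        rw [h1, h2, hCB x, hCB y, hskew B hB]
      have hK'comm : ∀ C₁ ∈ F', ∀ C₂ ∈ F', ∀ x : K, C₁ (C₂ x) = C₂ (C₁ x) := by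
        rintro C₁ ⟨B₁, hB₁, hCB₁⟩ C₂ ⟨B₂, hB₂, hCB₂⟩ x
        apply Subtype.ext
        calc ((C₁ (C₂ x) : K) : W) = B₁ ((C₂ x : K) : W) := hCB₁ _
          _ = B₁ (B₂ (x : W)) := by rw [hCB₂]
          _ = B₂ (B₁ (x : W)) := hcomm B₁ hB₁ B₂ hB₂ _
          _ = B₂ ((C₁ x : K) : W) := by rw [hCB₁]
          _ = ((C₂ (C₁ x) : K) : W) := (hCB₂ _).symm
      -- range has positive dimension
      have hRpos : 0 < finrank ℝ R := by
        rw [hR]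
        have : LinearMap.range A ≠ ⊥ := by
          intro h
          exact hAne (LinearMap.range_eq_bot.mp h)
        exact Module.finrank_pos_iff.mpr (Submodule.nontrivial_iff_ne_bot.mpr this)
      have hrn : finrank ℝ R + finrank ℝ K = n := by
        rw [← hn]; exact LinearMap.finrank_range_add_finrank_ker A
      have hKlt : finrank ℝ K < n := by omega
      have hEvenK : Even (finrank ℝ K) :=
        IH (finrank ℝ K) hKlt K rfl F' hK'skew hK'comm hK'ker
      have : n = finrank ℝ R + finrank ℝ K := hrn.symm
      rw [this]
      exact hEvenR.add hEvenK

/-- In a nonabelian Milnor algebra, the derived ideal `[g,g]` has even positive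
dimension. -/
theorem milnor_derived_even_dim {V : Type*} [NormedAddCommGroup V]
    [InnerProductSpace ℝ V] [FiniteDimensional ℝ V]
    (B : V →ₗ[ℝ] V →ₗ[ℝ] V)
    (hanti : ∀ x y : V, B x y = - B y x)
    (hjac : ∀ x y z : V, B x (B y z) = B (B x y) z + B y (B x z))
    (S : Set V)
    (hS : S = {x : V | ∀ y z : V, ⟪B x y, z⟫ + ⟪y, B x z⟫ = 0})
    (D : Submodule ℝ V)
    (hD : D = Submodule.span ℝ {w : V | ∃ x y : V, B x y = w})
    (hSab : ∀ x ∈ S, ∀ y ∈ S, B x y = 0)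
    (hDab : ∀ u ∈ D, ∀ v ∈ D, B u v = 0)
    (hperp : ∀ v : V, v ∈ D ↔ ∀ s ∈ S, ⟪s, v⟫ = 0)
    (hnonab : ∃ x y : V, B x y ≠ 0) :
    0 < Module.finrank ℝ D ∧ Even (Module.finrank ℝ D) := by
  classical
  -- positivity
  obtain ⟨x₀, y₀, hxy⟩ := hnonab
  have hxyD : B x₀ y₀ ∈ D := by
    rw [hD]; exact Submodule.subset_span ⟨x₀, y₀, rfl⟩
  have hpos : 0 < Module.finrank ℝ D := by
    apply Module.finrank_pos_iff.mpr
    exact ⟨⟨B x₀ y₀, hxyD⟩, 0, fun h => hxy (by simpa using congrArg Subtype.val h)⟩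
  refine ⟨hpos, ?_⟩
  -- every `ad x` preserves D
  have hmapD : ∀ x : V, ∀ w ∈ D, B x w ∈ D := by
    intro x w hw
    rw [hD] at hw ⊢
    induction hw using Submodule.span_induction with
    | mem w hw =>
      obtain ⟨y, z, rfl⟩ := hw
      rw [hjac x y z]
      exact add_mem (Submodule.subset_span ⟨_, _, rfl⟩) (Submodule.subset_span ⟨_, _, rfl⟩)
    | zero => simp
    | add u v _ _ hu hv => rw [map_add]; exact add_mem hu hv
    | smul c u _ hu => rw [map_smul]; exact Submodule.smul_mem _ c hu
  -- decomposition V = span S ⊔ D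
  set S' : Submodule ℝ V := Submodule.span ℝ S with hS'
  have hDperp : D = S'ᗮ := by
    ext v
    rw [Submodule.mem_orthogonal, hperp]
    constructor
    · intro h u hu
      induction hu using Submodule.span_induction with
      | mem s hs => exact h s hs
      | zero => simp
      | add a b _ _ ha hb => rw [inner_add_left, ha, hb, add_zero]
      | smul c a _ ha => rw [inner_smul_left, ha, mul_zero]
    · intro h s hs
      exact h s (Submodule.subset_span hs)
  have hdecomp : ∀ y : V, ∃ s ∈ S', ∃ d ∈ D, y = s + d := by
    intro y
    have htop : S' ⊔ S'ᗮ = ⊤ := Submodule.sup_orthogonal_of_hasOrthogonalProjection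
    have : y ∈ S' ⊔ S'ᗮ := htop ▸ Submodule.mem_top
    obtain ⟨s, hs, d, hd, hsd⟩ := Submodule.mem_sup.mp this
    exact ⟨s, hs, d, hDperp ▸ hd, hsd.symm⟩
  -- trivial common kernel
  have hcker : ∀ v ∈ D, (∀ s ∈ S, B s v = 0) → v = 0 := by
    intro v hv hvs
    have hcent : ∀ y : V, B v y = 0 := by
      intro y
      obtain ⟨s, hs, d, hd, rfl⟩ := hdecomp y
      have hBvs : B v s = 0 := by
        have hsub : S' ≤ LinearMap.ker (B v) := by
          rw [hS', Submodule.span_le]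
          intro t ht
          rw [SetLike.mem_coe, LinearMap.mem_ker, hanti v t, hvs t ht, neg_zero]
        simpa using hsub hs
      have hBvd : B v d = 0 := hDab v hv d hd
      rw [map_add, hBvs, hBvd, add_zero]
    have hvS : v ∈ S := by
      rw [hS]
      intro y z
      rw [hcent y, hcent z, inner_zero_left, inner_zero_right, add_zero]
    have : (⟪v, v⟫ : ℝ) = 0 := (hperp v).mp hv v hvS
    exact inner_self_eq_zero.mp this
  -- set up the restricted family on D
  set F : Set (↥D →ₗ[ℝ] ↥D) :=
    {C | ∃ s ∈ S, ∀ x : ↥D, ((C x : ↥D) : V) = B s (x : V)} with hF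
  have hFskew : ∀ C ∈ F, ∀ x y : ↥D, ⟪C x, y⟫ = -⟪x, C y⟫ := by
    rintro C ⟨s, hs, hCs⟩ x y
    have h1 : (⟪C x, y⟫ : ℝ) = ⟪((C x : ↥D) : V), (y : V)⟫ := rfl
    have h2 : (⟪x, C y⟫ : ℝ) = ⟪(x : V), ((C y : ↥D) : V)⟫ := rfl
    rw [hS] at hs
    have := hs (x : V) (y : V)
    rw [h1, h2, hCs x, hCs y]
    linarith
  have hFcomm : ∀ C₁ ∈ F, ∀ C₂ ∈ F, ∀ x : ↥D, C₁ (C₂ x) = C₂ (C₁ x) := by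
    rintro C₁ ⟨s, hs, hCs⟩ C₂ ⟨t, ht, hCt⟩ x
    apply Subtype.ext
    calc ((C₁ (C₂ x) : ↥D) : V) = B s ((C₂ x : ↥D) : V) := hCs _
      _ = B s (B t (x : V)) := by rw [hCt]
      _ = B (B s t) (x : V) + B t (B s (x : V)) := hjac s t (x : V)
      _ = B t (B s (x : V)) := by rw [hSab s hs t ht]; simp
      _ = B t ((C₁ x : ↥D) : V) := by rw [hCs]
      _ = ((C₂ (C₁ x) : ↥D) : V) := (hCt _).symm
  have hFker : ∀ w : ↥D, (∀ C ∈ F, C w = 0) → w = 0 := by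
    intro w hw
    apply Subtype.ext
    apply hcker (w : V) w.2
    intro s hs
    have hmem : ((B s).restrict (fun u hu => hmapD s u hu) : ↥D →ₗ[ℝ] ↥D) ∈ F :=
      ⟨s, hs, fun x => rfl⟩
    have h1 := hw _ hmem
    have h2 : (((B s).restrict (fun u hu => hmapD s u hu) w : ↥D) : V) = B s (w : V) := rfl
    rw [h1] at h2
    exact h2.symm
  exact even_of_commuting_skew (Module.finrank ℝ D) ↥D rfl F hFskew hFcomm hFker
end

section
/- Let ℝ⁴ have basis e₁,e₂,e₃,e₄ and a,b,c,d,e ∈ ℝ. Define the antisymmetric bilinear bracket by [e₁,e₂]=0, [e₁,e₃]=c·e₃, [e₁,e₄]=c·e₄, [e₂,e₃]=d·e₃−e·e₄, [e₂,e₄]=e·e₃+d·e₄, [e₃,e₄]=a·e₁+b·e₂. Then the Jacobi identity holds if and only if (a = 0 and b = 0) or (c = 0 and d = 0). -/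
/-- The bilinear antisymmetric bracket on `ℝ⁴` determined by `[e₁,e₂]=0`,
`[e₁,e₃]=c·e₃`, `[e₁,e₄]=c·e₄`, `[e₂,e₃]=d·e₃−e·e₄`, `[e₂,e₄]=e·e₃+d·e₄`,
`[e₃,e₄]=a·e₁+b·e₂`. -/
def bra4 (a b c d e : ℝ) (x y : Fin 4 → ℝ) : Fin 4 → ℝ :=
  ![a * (x 2 * y 3 - x 3 * y 2),
    b * (x 2 * y 3 - x 3 * y 2),
    c * (x 0 * y 2 - x 2 * y 0) + d * (x 1 * y 2 - x 2 * y 1)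
      + e * (x 1 * y 3 - x 3 * y 1),
    c * (x 0 * y 3 - x 3 * y 0) - e * (x 1 * y 2 - x 2 * y 1)
      + d * (x 1 * y 3 - x 3 * y 1)]

/-- The above bracket on `ℝ⁴` satisfies the Jacobi identity if and only if
`(a = 0 ∧ b = 0)` or `(c = 0 ∧ d = 0)`. -/
theorem bra4_jacobi_iff (a b c d e : ℝ) :
    (∀ x y z : Fin 4 → ℝ,
        bra4 a b c d e x (bra4 a b c d e y z)
          + bra4 a b c d e y (bra4 a b c d e z x)
          + bra4 a b c d e z (bra4 a b c d e x y) = 0) ↔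
      ((a = 0 ∧ b = 0) ∨ (c = 0 ∧ d = 0)) := by
  constructor
  · intro h
    have h1 := congrFun (h ![1,0,0,0] ![0,0,1,0] ![0,0,0,1]) 0
    have h2 := congrFun (h ![1,0,0,0] ![0,0,1,0] ![0,0,0,1]) 1
    have h3 := congrFun (h ![0,1,0,0] ![0,0,1,0] ![0,0,0,1]) 0
    have h4 := congrFun (h ![0,1,0,0] ![0,0,1,0] ![0,0,0,1]) 1
    simp [bra4] at h1 h2 h3 h4
    tauto
  · rintro (⟨ha, hb⟩ | ⟨hc, hd⟩) x y z <;>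
      funext i <;> fin_cases i <;>
      simp [bra4, *] <;> ring
end
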